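/- arXiv:1006.1404 — 5 statements merged into one kernel-verified Lean document; each statement's English description precedes it below -/
import Mathlib

section
/- Let c : ℕ → ℝ with 0 ≤ c k ≤ 1/2 for all k. On Ω = ℕ → Fin 3, let μ be the infinite product of the probability measures m k on Fin 3 given by m k {0} = c k, m k {1} = c k, m k {2} = 1 − 2 · c k. Then the event { ω : the set {k : ω k = 0} is infinite, and ω k ≠ 1 for all k } has μ-measure 0. -/
open MeasureTheory
open scoped ENNReal

private lemma cylinder_prod (μ : Measure (ℕ → Fin 3)) (w : ℕ → Fin 3 → ℝ≥0∞)
    (hμ : ∀ (n : ℕ) (s : Fin n → Fin 3),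
      μ {ω | ∀ k : Fin n, ω k = s k} = ∏ k : Fin n, w k (s k))
    (n : ℕ) (A : Fin n → Finset (Fin 3)) :
    μ {ω | ∀ k : Fin n, ω k ∈ A k} = ∏ k : Fin n, ∑ a ∈ A k, w k a := by
  have hset : {ω : ℕ → Fin 3 | ∀ k : Fin n, ω k ∈ A k}
      = ⋃ s ∈ Fintype.piFinset A, {ω : ℕ → Fin 3 | ∀ k : Fin n, ω k = s k} := by
    ext ω
    simp only [Set.mem_setOf_eq, Set.mem_iUnion, Fintype.mem_piFinset]
    constructor
    · intro h; exact ⟨fun k => ω k, fun k => h k, fun k => rfl⟩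
    · rintro ⟨s, hs, he⟩ k; rw [he k]; exact hs k
  rw [hset, measure_biUnion_finset, Finset.prod_univ_sum]
  · exact Finset.sum_congr rfl fun s _ => hμ n s
  · intro s _ t _ hst
    refine Set.disjoint_left.mpr fun ω hs' ht' => hst ?_
    funext k
    rw [← hs' k, ← ht' k]
  · intro s _
    have : {ω : ℕ → Fin 3 | ∀ k : Fin n, ω k = s k}
        = ⋂ k : Fin n, (fun ω : ℕ → Fin 3 => ω k) ⁻¹' {s k} := by
      ext ω; simp [Set.mem_iInter]
    rw [this]
    exact MeasurableSet.iInter fun k => (measurable_pi_apply _) (measurableSet_singleton _)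

/-- Let `c : ℕ → ℝ` with `0 ≤ c k ≤ 1/2`.  Let `μ` be the infinite product, over `k : ℕ`,
of the probability measures on `Fin 3` giving weight `c k` to `0`, `c k` to `1` and
`1 - 2 c k` to `2` (characterized by its values on the cylinders determined by the first
`n` coordinates).  Then the event "`{k | ω k = 0}` is infinite and `ω k ≠ 1` for all `k`"
has `μ`-measure `0`. -/
theorem stmt1 (c : ℕ → ℝ) (hc : ∀ k, 0 ≤ c k ∧ c k ≤ 1 / 2)
    (w : ℕ → Fin 3 → ℝ≥0∞)
    (hw0 : ∀ k, w k 0 = ENNReal.ofReal (c k))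
    (hw1 : ∀ k, w k 1 = ENNReal.ofReal (c k))
    (hw2 : ∀ k, w k 2 = ENNReal.ofReal (1 - 2 * c k))
    (μ : Measure (ℕ → Fin 3)) [IsProbabilityMeasure μ]
    (hμ : ∀ (n : ℕ) (s : Fin n → Fin 3),
      μ {ω | ∀ k : Fin n, ω k = s k} = ∏ k : Fin n, w k (s k)) :
    μ {ω | {k | ω k = 0}.Infinite ∧ ∀ k, ω k ≠ 1} = 0 := by
  by_cases hs : Summable c
  · -- Borel–Cantelli: finitely many zeros a.s.
    have h0 : ∀ k, μ {ω : ℕ → Fin 3 | ω k = 0} = ENNReal.ofReal (c k) := by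
      intro k
      have hcyl := cylinder_prod μ w hμ (k + 1)
        (fun j => if (j : ℕ) = k then {0} else Finset.univ)
      have hset : {ω : ℕ → Fin 3 |
          ∀ j : Fin (k + 1), ω j ∈ (if (j : ℕ) = k then ({0} : Finset (Fin 3)) else Finset.univ)}
          = {ω : ℕ → Fin 3 | ω k = 0} := by
        ext ω
        simp only [Set.mem_setOf_eq]
        constructor
        · intro h
          have := h (Fin.last k)
          simpa [Fin.val_last] using this
        · intro h j
          by_cases hj : (j : ℕ) = k
          · simp [hj, h]
          · simp [hj]
      have hprod : (∏ j : Fin (k + 1),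
          ∑ a ∈ (if (j : ℕ) = k then ({0} : Finset (Fin 3)) else Finset.univ), w j a)
          = ENNReal.ofReal (c k) := by
        rw [Fin.prod_univ_castSucc]
        have h1 : ∀ j : Fin k,
            (∑ a ∈ (if ((Fin.castSucc j : Fin (k+1)) : ℕ) = k then ({0} : Finset (Fin 3))
              else Finset.univ), w (Fin.castSucc j : Fin (k+1)) a) = 1 := by
          intro j
          have hj : ((Fin.castSucc j : Fin (k+1)) : ℕ) ≠ k := by
            simpa using j.isLt.ne
          rw [if_neg hj]
          rw [Fin.sum_univ_three, hw0, hw1, hw2,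
            ← ENNReal.ofReal_add (hc _).1 (hc _).1,
            ← ENNReal.ofReal_add (by linarith [(hc ((Fin.castSucc j : Fin (k+1)) : ℕ)).1])
              (by linarith [(hc ((Fin.castSucc j : Fin (k+1)) : ℕ)).2])]
          norm_num
          ring
        simp only [h1, Finset.prod_const_one, one_mul]
        rw [if_pos (by simp [Fin.val_last]), Finset.sum_singleton]
        simp [Fin.val_last, hw0]
      rw [hset, hprod] at hcyl
      exact hcyl
    have hsum : (∑' k, μ {ω : ℕ → Fin 3 | ω k = 0}) ≠ ∞ := by
      simp_rw [h0]
      rw [← ENNReal.ofReal_tsum_of_nonneg (fun k => (hc k).1) hs]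
      exact ENNReal.ofReal_ne_top
    have hlim := measure_limsup_atTop_eq_zero (μ := μ) hsum
    refine le_antisymm ?_ zero_le
    rw [← hlim]
    refine measure_mono fun ω hω => ?_
    rw [Filter.mem_limsup_iff_frequently_mem]
    exact Nat.frequently_atTop_iff_infinite.mpr hω.1
  · -- divergent case: no 1 ever has probability 0
    have hmem : ∀ a : Fin 3, a ∈ ({0, 2} : Finset (Fin 3)) ↔ a ≠ 1 := by decide
    have hF : ∀ n, μ {ω : ℕ → Fin 3 | ∀ k : Fin n, ω k ≠ 1}
        = ENNReal.ofReal (∏ k ∈ Finset.range n, (1 - c k)) := by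
      intro n
      have hcyl := cylinder_prod μ w hμ n (fun _ => ({0, 2} : Finset (Fin 3)))
      have hset : {ω : ℕ → Fin 3 | ∀ k : Fin n, ω k ∈ ({0, 2} : Finset (Fin 3))}
          = {ω : ℕ → Fin 3 | ∀ k : Fin n, ω k ≠ 1} := by
        ext ω
        simp only [Set.mem_setOf_eq]
        exact forall_congr' fun k => hmem (ω k)
      have hone : ∀ k : Fin n, (∑ a ∈ ({0, 2} : Finset (Fin 3)), w k a)
          = ENNReal.ofReal (1 - c k) := by
        intro k
        rw [show ({0, 2} : Finset (Fin 3)) = insert 0 {2} from rfl,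
          Finset.sum_insert (by decide), Finset.sum_singleton, hw0, hw2,
          ← ENNReal.ofReal_add (hc _).1 (by linarith [(hc (k : ℕ)).2])]
        ring_nf
      rw [hset] at hcyl
      rw [hcyl]
      simp only [hone]
      rw [Fin.prod_univ_eq_prod_range (fun k => ENNReal.ofReal (1 - c k)) n]
      exact (ENNReal.ofReal_prod_of_nonneg fun i _ => by linarith [(hc (i : ℕ)).2]).symm
    have hble : ∀ n, μ {ω : ℕ → Fin 3 | {k | ω k = 0}.Infinite ∧ ∀ k, ω k ≠ 1}
        ≤ ENNReal.ofReal (Real.exp (-∑ k ∈ Finset.range n, c k)) := by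
      intro n
      have hsub : {ω : ℕ → Fin 3 | {k | ω k = 0}.Infinite ∧ ∀ k, ω k ≠ 1}
          ⊆ {ω : ℕ → Fin 3 | ∀ k : Fin n, ω k ≠ 1} := fun ω hω k => hω.2 k
      refine le_trans (measure_mono hsub) ?_
      rw [hF n]
      refine ENNReal.ofReal_le_ofReal ?_
      have : Real.exp (-∑ k ∈ Finset.range n, c k)
          = ∏ k ∈ Finset.range n, Real.exp (-c k) := by
        rw [← Real.exp_sum, Finset.sum_neg_distrib]
      rw [this]
      refine Finset.prod_le_prod (fun i _ => by linarith [(hc i).2]) fun i _ => ?_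
      have := Real.add_one_le_exp (-c i)
      linarith
    have hdiv : Filter.Tendsto (fun n => ∑ k ∈ Finset.range n, c k) Filter.atTop Filter.atTop :=
      (not_summable_iff_tendsto_nat_atTop_of_nonneg fun k => (hc k).1).mp hs
    have htend : Filter.Tendsto
        (fun n => ENNReal.ofReal (Real.exp (-∑ k ∈ Finset.range n, c k)))
        Filter.atTop (nhds 0) := by
      have h1 : Filter.Tendsto (fun n => Real.exp (-∑ k ∈ Finset.range n, c k))
          Filter.atTop (nhds 0) := Real.tendsto_exp_neg_atTop_nhds_zero.comp hdiv
      simpa using ENNReal.tendsto_ofReal h1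
    exact le_antisymm (ge_of_tendsto' htend fun n => hble n) zero_le
end

section
/- Fix ε ∈ (0,1) and let γ be the probability measure on ℕ∞ := WithTop ℕ defined by γ {n} = ε · (1 − ε)^n for every n : ℕ and γ {∞} = 0. Then for every probability measure ν on ℕ∞, the product measure ν × γ assigns to the diagonal { (t, r) : t = r } measure at most ε. -/
open MeasureTheory
open scoped ENNReal

/-- Fix `ε ∈ (0,1)` and let `γ` be the probability measure on `ℕ∞ = WithTop ℕ` with
`γ {n} = ε (1-ε)ⁿ` for `n : ℕ` and `γ {∞} = 0`.  Then for every probability measure `ν`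
on `ℕ∞`, the product measure `ν × γ` gives the diagonal measure at most `ε`. -/
theorem stmt4 (ε : ℝ) (hε0 : 0 < ε) (hε1 : ε < 1)
    (γ : Measure ℕ∞) [IsProbabilityMeasure γ]
    (hγ : ∀ n : ℕ, γ {(n : ℕ∞)} = ENNReal.ofReal (ε * (1 - ε) ^ n))
    (hγtop : γ {(⊤ : ℕ∞)} = 0)
    (ν : Measure ℕ∞) [IsProbabilityMeasure ν] :
    (ν.prod γ) {p : ℕ∞ × ℕ∞ | p.1 = p.2} ≤ ENNReal.ofReal ε := by
  have hset : {p : ℕ∞ × ℕ∞ | p.1 = p.2} = ⋃ x : ℕ∞, {x} ×ˢ ({x} : Set ℕ∞) := by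
    ext ⟨a, b⟩
    simp [Set.mem_prod, eq_comm]
  have hdiag : MeasurableSet {p : ℕ∞ × ℕ∞ | p.1 = p.2} := by
    rw [hset]
    exact MeasurableSet.iUnion fun x =>
      (measurableSet_singleton x).prod (measurableSet_singleton x)
  rw [Measure.prod_apply hdiag]
  have hkey : ∀ t : ℕ∞, γ (Prod.mk t ⁻¹' {p : ℕ∞ × ℕ∞ | p.1 = p.2}) ≤ ENNReal.ofReal ε := by
    intro t
    have hpre : Prod.mk t ⁻¹' {p : ℕ∞ × ℕ∞ | p.1 = p.2} = {t} := by
      ext r; simp [eq_comm]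
    rw [hpre]
    induction t using WithTop.recTopCoe with
    | top => exact le_trans (le_of_eq hγtop) zero_le
    | coe n =>
      rw [show (WithTop.some n : ℕ∞) = (n : ℕ∞) from (Nat.cast_withTop n).symm, hγ n]
      apply ENNReal.ofReal_le_ofReal
      calc ε * (1 - ε) ^ n ≤ ε * 1 := by
            apply mul_le_mul_of_nonneg_left _ hε0.le
            exact pow_le_one₀ (by linarith) (by linarith)
        _ = ε := mul_one ε
  calc ∫⁻ t, γ (Prod.mk t ⁻¹' {p : ℕ∞ × ℕ∞ | p.1 = p.2}) ∂ν
      ≤ ∫⁻ _, ENNReal.ofReal ε ∂ν := lintegral_mono hkey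
    _ = ENNReal.ofReal ε := by simp
end

section
/- Let ν★ be the probability measure on ℕ∞ := WithTop ℕ defined by ν★ {∞} = 1/2 and ν★ {n} = 2^{−(n+2)} for every n : ℕ. Then for every probability measure μ on ℕ∞, the product measure ν★ × μ assigns strictly positive measure to the diagonal { (t, r) : t = r }. -/
open MeasureTheory
open scoped ENNReal

/-- Let `ν★` be the probability measure on `ℕ∞ = WithTop ℕ` with `ν★ {∞} = 1/2` and
`ν★ {n} = 2^{-(n+2)}` for `n : ℕ`.  Then for every probability measure `μ` on `ℕ∞`, the
product measure `ν★ × μ` gives strictly positive measure to the diagonal. -/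
theorem stmt6 (ν : Measure ℕ∞) [IsProbabilityMeasure ν]
    (hνtop : ν {(⊤ : ℕ∞)} = 1 / 2)
    (hν : ∀ n : ℕ, ν {(n : ℕ∞)} = (1 / 2 : ℝ≥0∞) ^ (n + 2))
    (μ : Measure ℕ∞) [IsProbabilityMeasure μ] :
    0 < (ν.prod μ) {p : ℕ∞ × ℕ∞ | p.1 = p.2} := by
  -- there is an atom of μ
  have hatom : ∃ x : ℕ∞, μ {x} ≠ 0 := by
    by_contra h
    push_neg at h
    have : μ Set.univ ≤ ∑' x : ℕ∞, μ {x} := by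
      rw [show (Set.univ : Set ℕ∞) = ⋃ x : ℕ∞, {x} from (Set.iUnion_of_singleton ℕ∞).symm]
      exact measure_iUnion_le _
    simp [h, measure_univ] at this
  obtain ⟨x, hx⟩ := hatom
  have hνx : ν {x} ≠ 0 := by
    cases x with
    | top => rw [hνtop]; simp
    | coe n => rw [hν n]; exact pow_ne_zero _ (by simp)
  have hsub : ({x} ×ˢ {x} : Set (ℕ∞ × ℕ∞)) ⊆ {p : ℕ∞ × ℕ∞ | p.1 = p.2} := by
    rintro ⟨a, b⟩ ⟨ha, hb⟩
    simp_all
  calc (0 : ℝ≥0∞) < ν {x} * μ {x} := by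
        exact ENNReal.mul_pos hνx hx
    _ = (ν.prod μ) ({x} ×ˢ {x}) := (Measure.prod_prod _ _).symm
    _ ≤ _ := measure_mono hsub
end

section
/- There is no sequence p : ℕ → ℝ with 0 ≤ p n ≤ 1 for all n which is eventually periodic (i.e., there exist N and d > 0 with p (n + d) = p n for all n ≥ N) and which satisfies both: (i) for every n, p n · ∏_{j<n} (1 − p j) > 0, and (ii) there exists δ > 0 with ∏_{j≤n} (1 − p j) ≥ δ for all n. -/
/-- There is no sequence `p : ℕ → ℝ` with `0 ≤ p n ≤ 1` for all `n`, eventually periodic,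
such that both (i) `p n · ∏_{j<n} (1 - p j) > 0` for every `n`, and (ii) some `δ > 0`
satisfies `∏_{j≤n} (1 - p j) ≥ δ` for all `n`. -/
theorem stmt8 :
    ¬ ∃ p : ℕ → ℝ,
        (∀ n, 0 ≤ p n ∧ p n ≤ 1) ∧
        (∃ N d, 0 < d ∧ ∀ n ≥ N, p (n + d) = p n) ∧
        (∀ n, 0 < p n * ∏ j ∈ Finset.range n, (1 - p j)) ∧
        (∃ δ > (0 : ℝ), ∀ n, δ ≤ ∏ j ∈ Finset.range (n + 1), (1 - p j)) := by
  rintro ⟨p, hp01, ⟨N, d, hd, hper⟩, hpos, δ, hδ, hprod⟩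
  -- p n > 0 for all n
  have hppos : ∀ n, 0 < p n := by
    intro n
    have h1 := hpos n
    have h2 : 0 ≤ ∏ j ∈ Finset.range n, (1 - p j) :=
      Finset.prod_nonneg (fun j _ => by linarith [(hp01 j).2])
    nlinarith [(hp01 n).1]
  -- p (N + k*d) = p N
  have hkey : ∀ k, p (N + k * d) = p N := by
    intro k
    induction k with
    | zero => simp
    | succ k ih =>
      have : N + (k + 1) * d = (N + k * d) + d := by ring
      rw [this, hper _ (by omega), ih]
  set c := p N with hc
  have hc0 : 0 < c := hppos N
  have hc1 : c ≤ 1 := (hp01 N).2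
  have h1c : |1 - c| < 1 := by
    rw [abs_lt]; constructor <;> linarith
  obtain ⟨K, hK⟩ := exists_pow_lt_of_lt_one hδ h1c
  -- take n = N + K * d
  set n := N + K * d with hn
  have hnonneg : ∀ j, 0 ≤ 1 - p j := fun j => by linarith [(hp01 j).2]
  have hle1 : ∀ j, 1 - p j ≤ 1 := fun j => by linarith [(hppos j)]
  set S : Finset ℕ := (Finset.range K).image (fun k => N + k * d) with hS
  have hSsub : S ⊆ Finset.range (n + 1) := by
    intro x hx
    simp only [hS, Finset.mem_image, Finset.mem_range] at hx
    obtain ⟨k, hk, rfl⟩ := hx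
    simp only [Finset.mem_range, hn]
    have : k * d ≤ K * d := Nat.mul_le_mul_right d (by omega)
    omega
  have hSprod : ∏ j ∈ S, (1 - p j) = (1 - c) ^ K := by
    rw [hS, Finset.prod_image]
    · rw [Finset.prod_congr rfl (fun k _ => by rw [hkey k]), Finset.prod_const,
        Finset.card_range]
    · intro a _ b _ hab
      have := Nat.eq_of_mul_eq_mul_right hd (by simp only at hab; omega : a * d = b * d)
      omega
  have hbound : ∏ j ∈ Finset.range (n + 1), (1 - p j) ≤ (1 - c) ^ K := by
    rw [← Finset.prod_sdiff hSsub, ← hSprod]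
    have h1 : ∏ j ∈ Finset.range (n + 1) \ S, (1 - p j) ≤ 1 :=
      Finset.prod_le_one (fun j _ => hnonneg j) (fun j _ => hle1 j)
    have h2 : 0 ≤ ∏ j ∈ S, (1 - p j) := Finset.prod_nonneg (fun j _ => hnonneg j)
    nlinarith [Finset.prod_nonneg (fun j (_ : j ∈ Finset.range (n+1) \ S) => hnonneg j)]
  have := hprod n
  have habs : (1 - c) ^ K ≤ |1 - c| ^ K := by
    calc (1 - c) ^ K ≤ |(1 - c) ^ K| := le_abs_self _
    _ = |1 - c| ^ K := abs_pow _ _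
  linarith
end

section
/- On Ω = ℕ → Fin 3, let μ be the infinite product of the uniform probability measure on Fin 3. For every family of functions f, with f n : (Fin n → Fin 3) → Fin 3 for each n, the event { ω : ∃ k, (∀ j < k, ω j = f j (fun i : Fin j => ω i)) ∧ ω k = f k (fun i : Fin k => ω i) + 1 } has μ-measure exactly 1/2 (addition taken in Fin 3). -/
open MeasureTheory
open scoped ENNReal

/-- The unique play of Eve that always ties against the strategy `f`. -/
def trace (f : (n : ℕ) → (Fin n → Fin 3) → Fin 3) : ℕ → Fin 3
  | n => f n (fun i : Fin n => trace f i)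
decreasing_by exact i.isLt

lemma trace_eq (f : (n : ℕ) → (Fin n → Fin 3) → Fin 3) (n : ℕ) :
    trace f n = f n (fun i : Fin n => trace f i) := by
  rw [trace]

lemma prefix_eq (f : (n : ℕ) → (Fin n → Fin 3) → Fin 3) (ω : ℕ → Fin 3) (k : ℕ)
    (h : ∀ j < k, ω j = f j (fun i : Fin j => ω i)) :
    ∀ j < k, ω j = trace f j := by
  intro j hj
  induction j using Nat.strong_induction_on with
  | _ j ih =>
    rw [h j hj, trace_eq]
    congr 1
    funext i
    exact ih i i.isLt (lt_trans i.isLt hj)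

/-- Let `μ` be the infinite product over `ℕ` of the uniform probability measure on `Fin 3`
(characterized by its values on the cylinders determined by the first `n` coordinates).
For every family `f` with `f n : (Fin n → Fin 3) → Fin 3`, the event "there is a round `k`
with `ω j = f j (ω↾j)` for all `j < k` (ties) and `ω k = f k (ω↾k) + 1`" has `μ`-measure
exactly `1/2` (addition taken in `Fin 3`). -/
theorem stmt10 (μ : Measure (ℕ → Fin 3)) [IsProbabilityMeasure μ]
    (hμ : ∀ (n : ℕ) (s : Fin n → Fin 3),
      μ {ω | ∀ k : Fin n, ω k = s k} = (1 / 3 : ℝ≥0∞) ^ n)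
    (f : (n : ℕ) → (Fin n → Fin 3) → Fin 3) :
    μ {ω | ∃ k, (∀ j < k, ω j = f j (fun i : Fin j => ω i)) ∧
        ω k = f k (fun i : Fin k => ω i) + 1} = 1 / 2 := by
  -- the fixed cylinder string for winning at round `k`
  set c : (k : ℕ) → Fin (k + 1) → Fin 3 :=
    fun k j => if (j : ℕ) = k then trace f k + 1 else trace f j with hc
  -- the winning-at-round-`k` event
  set W : ℕ → Set (ℕ → Fin 3) :=
    fun k => {ω | (∀ j < k, ω j = f j (fun i : Fin j => ω i)) ∧
        ω k = f k (fun i : Fin k => ω i) + 1} with hW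
  -- each `W k` is a fixed cylinder
  have hWc : ∀ k, W k = {ω | ∀ j : Fin (k + 1), ω j = c k j} := by
    intro k
    ext ω
    simp only [hW, hc, Set.mem_setOf_eq]
    constructor
    · rintro ⟨hties, hwin⟩
      intro j
      have hpre := prefix_eq f ω k hties
      by_cases hj : (j : ℕ) = k
      · simp only [hj, if_pos rfl]
        rw [hj] at *
        rw [hwin, trace_eq]
        congr 2
        funext i
        exact hpre i i.isLt
      · simp only [if_neg hj]
        exact hpre j (lt_of_le_of_ne (Nat.lt_succ_iff.mp j.isLt) hj)
    · intro h
      have hpre : ∀ j < k, ω j = trace f j := by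
        intro j hj
        have := h ⟨j, Nat.lt_succ_of_lt hj⟩
        simpa [Nat.ne_of_lt hj] using this
      constructor
      · intro j hj
        rw [hpre j hj, trace_eq]
        congr 1
        funext i
        exact (hpre i (lt_trans i.isLt hj)).symm
      · have hk := h ⟨k, Nat.lt_succ_self k⟩
        have heq : (fun i : Fin k => ω i) = fun i : Fin k => trace f i :=
          funext fun i => hpre i i.isLt
        simp only [Fin.val_mk, if_true, reduceIte] at hk
        rw [hk, trace_eq, heq]
  -- measure of each `W k`
  have hWμ : ∀ k, μ (W k) = (1 / 3 : ℝ≥0∞) ^ (k + 1) := by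
    intro k; rw [hWc k]; exact hμ (k + 1) (c k)
  -- measurability
  have hWm : ∀ k, MeasurableSet (W k) := by
    intro k
    rw [hWc k]
    have : {ω : ℕ → Fin 3 | ∀ j : Fin (k + 1), ω j = c k j}
        = ⋂ j : Fin (k + 1), (fun ω : ℕ → Fin 3 => ω j) ⁻¹' {c k j} := by
      ext ω; simp
    rw [this]
    exact MeasurableSet.iInter fun j =>
      (measurable_pi_apply (j : ℕ)) (measurableSet_singleton _)
  -- pairwise disjointness
  have hWd : Pairwise (Function.onFun Disjoint W) := by
    have key : ∀ k k', k < k' → Disjoint (W k) (W k') := by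
      intro k k' hkk'
      rw [Set.disjoint_left]
      rintro ω ⟨hties, hwin⟩ ⟨hties', _⟩
      have h1 : ω k = f k (fun i : Fin k => ω i) := hties' k hkk'
      rw [h1] at hwin
      have h2 : (1 : Fin 3) = 0 := left_eq_add.mp hwin
      exact absurd h2 (by decide)
    intro k k' hne
    rcases lt_or_gt_of_ne hne with h | h
    · exact key k k' h
    · exact (key k' k h).symm
  -- the event is the union of the `W k`
  have hunion : {ω : ℕ → Fin 3 | ∃ k, (∀ j < k, ω j = f j (fun i : Fin j => ω i)) ∧
      ω k = f k (fun i : Fin k => ω i) + 1} = ⋃ k, W k := by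
    ext ω; simp [hW]
  rw [hunion, measure_iUnion hWd hWm]
  simp_rw [hWμ]
  -- geometric series
  have h : ∀ k : ℕ, (1/3 : ℝ≥0∞) ^ (k+1) = (1/3) * (1/3)^k := fun k => pow_succ' _ _
  rw [tsum_congr h, ENNReal.tsum_mul_left, ENNReal.tsum_geometric]
  have hadd : (2/3 : ℝ≥0∞) + 1/3 = 1 := by
    rw [ENNReal.div_add_div_same]
    have : (2+1 : ℝ≥0∞) = 3 := by norm_num
    rw [this, ENNReal.div_self] <;> norm_num
  have h13 : (1:ℝ≥0∞) - 1/3 = 2/3 := ENNReal.sub_eq_of_eq_add (by norm_num) hadd.symm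
  rw [h13, ENNReal.inv_div (by norm_num) (by norm_num)]
  have hfin : (1/3 : ℝ≥0∞) * (3/2) ≠ ⊤ := by
    apply ENNReal.mul_ne_top <;> simp [ENNReal.div_eq_top]
  rw [← ENNReal.toReal_eq_toReal_iff' hfin (by norm_num)]
  rw [ENNReal.toReal_mul, ENNReal.toReal_div, ENNReal.toReal_div, ENNReal.toReal_div]
  norm_num
end
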